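/- General Approximation Theorem: Let Φ be a family of continuous functions ℝ → ℝ with the universal approximation property on ℝ, i.e., for every compact interval I ⊆ ℝ, every continuous g : I → ℝ, and every ε > 0, there are finitely many functions φ_1, …, φ_r ∈ Φ and real coefficients c_1, …, c_r with sup_{t ∈ I} |g(t) − ∑_{i=1}^r c_i φ_i(t)| < ε. Define Φ^N = { x ↦ φ(a_1 x_1 + a_2 x_2 + ⋯ + a_N x_N) : (a_1, …, a_N) ∈ ℝ^N, φ ∈ Φ }. Then Φ^N has the universal approximation property on ℝ^N: for every compact set K ⊆ ℝ^N, every continuous function g : K → ℝ, and every ε > 0, there exist finitely many functions ψ_1, …, ψ_s ∈ Φ^N and real coefficients c_1, …, c_s with sup_{x ∈ K} |g(x) − ∑_{i=1}^s c_i ψ_i(x)| < ε. -/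

import Mathlib

/-- A family `Φ` of functions `ℝ → ℝ` has the universal approximation
property on `ℝ`: every continuous function on a compact interval can be
uniformly approximated by finite real linear combinations of members of `Φ`. -/
def HasUAP (Φ : Set (ℝ → ℝ)) : Prop :=
  ∀ (a b : ℝ) (g : ℝ → ℝ), ContinuousOn g (Set.Icc a b) → ∀ ε > 0,
    ∃ (r : ℕ) (φ : Fin r → ℝ → ℝ) (c : Fin r → ℝ),
      (∀ i, φ i ∈ Φ) ∧ ∀ t ∈ Set.Icc a b, |g t - ∑ i, c i * φ i t| < ε

/-- **General Approximation Theorem.** If `Φ ⊆ C(ℝ, ℝ)` has the universal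
approximation property on `ℝ`, then the family
`Φ^N = {x ↦ φ(a·x) : a ∈ ℝ^N, φ ∈ Φ}` has the universal approximation
property on `ℝ^N`. -/
theorem general_approximation_theorem (N : ℕ) (Φ : Set (ℝ → ℝ))
    (hcont : ∀ φ ∈ Φ, Continuous φ) (hΦ : HasUAP Φ)
    (K : Set (Fin N → ℝ)) (hK : IsCompact K)
    (g : (Fin N → ℝ) → ℝ) (hg : ContinuousOn g K) :
    ∀ ε > 0, ∃ (s : ℕ) (φ : Fin s → ℝ → ℝ) (a : Fin s → Fin N → ℝ) (c : Fin s → ℝ),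
      (∀ i, φ i ∈ Φ) ∧
      ∀ x ∈ K, |g x - ∑ i, c i * φ i (∑ j, a i j * x j)| < ε := by
  intro ε hε
  haveI : CompactSpace K := isCompact_iff_compactSpace.mp hK
  -- the generating ridge exponentials
  set E : (Fin N → ℝ) → C(K, ℝ) :=
    fun a => ⟨fun x => Real.exp (∑ j, a j * (x : Fin N → ℝ) j), by
      apply Real.continuous_exp.comp
      exact continuous_finset_sum _ fun j _ =>
        (continuous_const.mul ((continuous_apply j).comp continuous_subtype_val))⟩ with hE
  set S : Set C(K, ℝ) := Set.range E with hS
  -- products of generators are generators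
  have hmul : ∀ a b, E a * E b = E (a + b) := by
    intro a b
    ext x
    simp [hE, ← Real.exp_add, ← Finset.sum_add_distrib, add_mul]
  have hone : (1 : C(K, ℝ)) = E 0 := by
    ext x; simp [hE]
  -- the adjoined algebra separates points
  have hsep : (Algebra.adjoin ℝ S).SeparatesPoints := by
    intro x y hxy
    have : (x : Fin N → ℝ) ≠ (y : Fin N → ℝ) := fun h => hxy (Subtype.ext h)
    obtain ⟨j, hj⟩ := Function.ne_iff.mp this
    refine ⟨E (fun k => if k = j then 1 else 0), ⟨_, Algebra.subset_adjoin ⟨_, rfl⟩, rfl⟩, ?_⟩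
    simp only [hE, ContinuousMap.coe_mk]
    have hx : ∀ z : K, (∑ k, (if k = j then (1:ℝ) else 0) * (z : Fin N → ℝ) k)
        = (z : Fin N → ℝ) j := by
      intro z
      rw [Finset.sum_eq_single j] <;> simp (config := {contextual := true})
    rw [hx x, hx y]
    exact fun h => hj (Real.exp_injective h)
  -- Stone–Weierstrass
  obtain ⟨⟨f, hfA⟩, hf⟩ :=
    ContinuousMap.exists_mem_subalgebra_near_continuous_of_separatesPoints
      (Algebra.adjoin ℝ S) hsep (fun x : K => g x)
      (hg.restrict) (ε/2) (by linarith)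
  -- adjoin = span
  have hspan : f ∈ Submodule.span ℝ S := by
    have hsub : ↑(Submonoid.closure S) ⊆ (Submodule.span ℝ S : Set C(K, ℝ)) := by
      intro z hz
      have : z ∈ S := by
        induction hz using Submonoid.closure_induction with
        | mem z hz => exact hz
        | one => exact ⟨0, hone.symm⟩
        | mul a b _ _ ha hb =>
          obtain ⟨u, hu⟩ := ha; obtain ⟨v, hv⟩ := hb
          exact ⟨u + v, by rw [← hmul, hu, hv]⟩
      exact Submodule.subset_span this
    have := Algebra.adjoin_eq_span_of_subset (R := ℝ) hsub
    rw [← this]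
    exact hfA
  obtain ⟨r, c, z, hzf⟩ := Submodule.mem_span_set'.mp hspan
  -- extract directions
  have hza : ∀ i, ∃ a : Fin N → ℝ, (z i : C(K, ℝ)) = E a := by
    intro i
    obtain ⟨a, ha⟩ := (z i).2
    exact ⟨a, ha.symm⟩
  choose a ha using hza
  -- uniform bound for the ridge arguments
  have hbound : ∀ i : Fin r, ∃ M : ℝ, ∀ x ∈ K, |∑ j, a i j * x j| ≤ M := by
    intro i
    have hc : ContinuousOn (fun x : Fin N → ℝ => |∑ j, a i j * x j|) K :=
      (continuous_abs.comp (continuous_finset_sum _ fun j _ =>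
        continuous_const.mul (continuous_apply j))).continuousOn
    rcases K.eq_empty_or_nonempty with h | h
    · exact ⟨0, by simp [h]⟩
    · obtain ⟨M, hM⟩ := hK.exists_bound_of_continuousOn hc
      exact ⟨M, fun x hx => by simpa using (hM x hx)⟩
  choose M hM using hbound
  set M₀ : ℝ := ∑ i, max (M i) 0 with hM₀
  have hMle : ∀ i, M i ≤ M₀ := by
    intro i
    calc M i ≤ max (M i) 0 := le_max_left _ _
    _ ≤ M₀ := Finset.single_le_sum (f := fun i => max (M i) 0)
        (fun j _ => le_max_right _ _) (Finset.mem_univ i)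
  -- approximate exp on [-M₀, M₀]
  set C : ℝ := ∑ i, |c i| with hC
  have hCnn : 0 ≤ C := Finset.sum_nonneg fun _ _ => abs_nonneg _
  have hδ : (0:ℝ) < ε/2 / (1 + C) := by positivity
  obtain ⟨m, φ, d, hφΦ, hφ⟩ := hΦ (-M₀) M₀ Real.exp Real.continuous_exp.continuousOn _ hδ
  -- assemble
  refine ⟨r * m, fun k => φ (finProdFinEquiv.symm k).2, fun k => a (finProdFinEquiv.symm k).1,
    fun k => c (finProdFinEquiv.symm k).1 * d (finProdFinEquiv.symm k).2,
    fun k => hφΦ _, ?_⟩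
  intro x hx
  have hxK : (⟨x, hx⟩ : K) ∈ Set.univ := trivial
  -- rewrite the double sum
  have hsum : (∑ k : Fin (r * m), c (finProdFinEquiv.symm k).1 * d (finProdFinEquiv.symm k).2 *
      φ (finProdFinEquiv.symm k).2 (∑ j, a (finProdFinEquiv.symm k).1 j * x j))
      = ∑ i : Fin r, c i * ∑ j', d j' * φ j' (∑ j, a i j * x j) := by
    rw [← finProdFinEquiv.sum_comp (M := ℝ)]
    simp only [Equiv.symm_apply_apply]
    rw [Fintype.sum_prod_type]
    refine Finset.sum_congr rfl fun i _ => ?_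
    rw [Finset.mul_sum]
    exact Finset.sum_congr rfl fun j _ => by ring
  rw [hsum]
  have hfx : f ⟨x, hx⟩ = ∑ i : Fin r, c i * Real.exp (∑ j, a i j * x j) := by
    have : ((∑ i, c i • (z i : C(K, ℝ))) : C(K, ℝ)) ⟨x, hx⟩
        = ∑ i, c i * Real.exp (∑ j, a i j * x j) := by
      rw [ContinuousMap.coe_sum, Finset.sum_apply]
      congr 1; ext i
      rw [ha i]
      simp [hE]
    rw [← hzf]; exact this
  have h1 : |g x - ∑ i : Fin r, c i * Real.exp (∑ j, a i j * x j)| < ε/2 := by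
    rw [← hfx]
    have := hf ⟨x, hx⟩
    rw [Real.norm_eq_abs, abs_sub_comm] at this
    exact this
  have h2 : |∑ i : Fin r, c i * Real.exp (∑ j, a i j * x j)
      - ∑ i : Fin r, c i * ∑ j', d j' * φ j' (∑ j, a i j * x j)| < ε/2 := by
    rw [← Finset.sum_sub_distrib]
    have hterm : ∀ i : Fin r, |c i * Real.exp (∑ j, a i j * x j)
        - c i * ∑ j', d j' * φ j' (∑ j, a i j * x j)| ≤ |c i| * (ε/2/(1+C)) := by
      intro i
      rw [← mul_sub, abs_mul]
      have hmem : (∑ j, a i j * x j) ∈ Set.Icc (-M₀) M₀ := by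
        have := hM i x hx
        have := hMle i
        constructor <;> [linarith [neg_abs_le (∑ j, a i j * x j)];
          linarith [le_abs_self (∑ j, a i j * x j)]]
      exact mul_le_mul_of_nonneg_left (le_of_lt (hφ _ hmem)) (abs_nonneg _)
    calc |∑ i : Fin r, (c i * Real.exp (∑ j, a i j * x j)
          - c i * ∑ j', d j' * φ j' (∑ j, a i j * x j))|
        ≤ ∑ i : Fin r, |c i * Real.exp (∑ j, a i j * x j)
          - c i * ∑ j', d j' * φ j' (∑ j, a i j * x j)| := Finset.abs_sum_le_sum_abs _ _
      _ ≤ ∑ i : Fin r, |c i| * (ε/2/(1+C)) := Finset.sum_le_sum fun i _ => hterm i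
      _ = C * (ε/2/(1+C)) := by rw [← Finset.sum_mul]
      _ < ε/2 := by
          rw [div_eq_inv_mul, ← mul_assoc]
          have : C * (1+C)⁻¹ < 1 := by
            rw [mul_inv_lt_iff₀ (by linarith)]
            linarith
          nlinarith
  calc |g x - ∑ i : Fin r, c i * ∑ j', d j' * φ j' (∑ j, a i j * x j)|
      ≤ |g x - ∑ i : Fin r, c i * Real.exp (∑ j, a i j * x j)|
        + |∑ i : Fin r, c i * Real.exp (∑ j, a i j * x j)
          - ∑ i : Fin r, c i * ∑ j', d j' * φ j' (∑ j, a i j * x j)| := abs_sub_le _ _ _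
    _ < ε/2 + ε/2 := add_lt_add h1 h2
    _ = ε := by ring
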